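/- Let D = (C_1,…,C_r) be a lexicographic northwest diagram. Then the maximal intersection blowup D̂ — the diagram whose columns are the distinct sets of the form ⋂_{j∈S} C_j for nonempty S ⊆ {1,…,r}, each appearing once and arranged in lexicographic order — is again a lexicographic northwest diagram. -/

import Mathlib

/-- A diagram, given as a list of columns `C : Fin r → Finset ℕ`, is *northwest* if
for all `j ≤ j'`, `i ∈ C j` and `i' ∈ C j'` imply `min i i' ∈ C j`. -/
def IsNorthwest {r : ℕ} (C : Fin r → Finset ℕ) : Prop :=
  ∀ j j' : Fin r, j ≤ j' → ∀ i ∈ C j, ∀ i' ∈ C j', min i i' ∈ C j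

/-- `A` is an *initial subset* of `B` : `A ⊊ B` and every element of `B \ A` is greater
than every element of `A`. -/
def InitSub (A B : Finset ℕ) : Prop :=
  A ⊂ B ∧ ∀ x ∈ B \ A, ∀ y ∈ A, y < x

/-- Lexicographic comparison of finite subsets of `ℕ`, comparing the increasing lists of
elements: `A <lex B` iff the sorted list of `A` is smaller than that of `B` in the
(strict) lexicographic order on lists (in particular a proper initial segment is
smaller). -/
def LexLT (A B : Finset ℕ) : Prop :=
  List.Lex (· < ·) (A.sort (· ≤ ·)) (B.sort (· ≤ ·))

/-- A list of columns is *lexicographic* if it is strictly increasing in `LexLT`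
(in particular the columns are pairwise distinct). -/
def IsLex {r : ℕ} (C : Fin r → Finset ℕ) : Prop :=
  ∀ a b : Fin r, a < b → LexLT (C a) (C b)

/-- Structural consequence of lex order on strictly sorted lists: if `u <lex v`,
`i ∈ u`, `i' ∈ v` with `i' < i`, then either `i' ∈ u`, or some `a ∈ u \ v` satisfies
`a < i'`. -/
lemma lex_aux : ∀ {u v : List ℕ}, List.Lex (· < ·) u v →
    u.Pairwise (· < ·) → v.Pairwise (· < ·) →
    ∀ i ∈ u, ∀ i' ∈ v, i' < i → i' ∈ u ∨ ∃ a, a ∈ u ∧ a ∉ v ∧ a < i' := by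
  intro u v h
  induction h with
  | nil => intro _ _ i hi; simp at hi
  | @cons x u' v' h ih =>
    intro hu hv i hi i' hi' hlt
    rcases List.mem_cons.1 hi' with rfl | hi'v
    · exact Or.inl (List.mem_cons_self)
    · rcases List.mem_cons.1 hi with rfl | hiu
      · exact absurd (List.rel_of_pairwise_cons hv hi'v) (not_lt.2 hlt.le)
      · rcases ih hu.of_cons hv.of_cons i hiu i' hi'v hlt with h1 | ⟨a, ha, hav, halt⟩
        · exact Or.inl (List.mem_cons_of_mem _ h1)
        · refine Or.inr ⟨a, List.mem_cons_of_mem _ ha, ?_, halt⟩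
          intro hmem
          rcases List.mem_cons.1 hmem with rfl | h2
          · exact absurd (List.rel_of_pairwise_cons hu ha) (lt_irrefl a)
          · exact hav h2
  | @rel x u' y v' hxy =>
    intro hu hv i hi i' hi' hlt
    refine Or.inr ⟨x, List.mem_cons_self, ?_, ?_⟩
    · intro hmem
      rcases List.mem_cons.1 hmem with rfl | h2
      · exact lt_irrefl x hxy
      · exact absurd (List.rel_of_pairwise_cons hv h2) (not_lt.2 hxy.le)
    · rcases List.mem_cons.1 hi' with rfl | h2
      · exact hxy
      · exact hxy.trans (List.rel_of_pairwise_cons hv h2)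

lemma lexLT_aux {A B : Finset ℕ} (h : LexLT A B) {i i' : ℕ}
    (hi : i ∈ A) (hi' : i' ∈ B) (hlt : i' < i) :
    i' ∈ A ∨ ∃ a, a ∈ A ∧ a ∉ B ∧ a < i' := by
  have := lex_aux h (Finset.sortedLT_sort A).pairwise (Finset.sortedLT_sort B).pairwise i
    ((Finset.mem_sort _).2 hi) i' ((Finset.mem_sort _).2 hi') hlt
  simpa [Finset.mem_sort] using this

lemma key_inj : Function.Injective (fun A : Finset ℕ => A.sort (· ≤ ·)) := by
  intro A B h
  ext x
  rw [← Finset.mem_sort (α := ℕ) (· ≤ ·), ← Finset.mem_sort (α := ℕ) (· ≤ ·)]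
  simp only at h
  rw [h]

lemma lexLT_trichotomy (A B : Finset ℕ) : LexLT A B ∨ A = B ∨ LexLT B A := by
  haveI : Std.Trichotomous (List.Lex (· < ·) : List ℕ → List ℕ → Prop) := List.Lex.trichotomous _
  rcases trichotomous (r := List.Lex (· < ·)) (A.sort (· ≤ ·)) (B.sort (· ≤ ·)) with
    h | h | h
  · exact Or.inl h
  · exact Or.inr (Or.inl (key_inj h))
  · exact Or.inr (Or.inr h)

lemma lexLT_asymm {A B : Finset ℕ} (h : LexLT A B) : ¬ LexLT B A := by
  haveI : Std.Asymm (List.Lex (· < ·) : List ℕ → List ℕ → Prop) := List.Lex.asymm _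
  exact asymm (r := List.Lex (· < ·)) h

lemma lexLT_trans {A B D : Finset ℕ} (h1 : LexLT A B) (h2 : LexLT B D) : LexLT A D := by
  haveI : IsTrans (List ℕ) (List.Lex (· < ·)) := ⟨fun a b c h1 h2 => (List.lt_iff_lex_lt _ _).1 (@lt_trans (List ℕ) _ a b c ((List.lt_iff_lex_lt _ _).2 h1) ((List.lt_iff_lex_lt _ _).2 h2))⟩
  exact IsTrans.trans (r := List.Lex (· < ·)) _ _ _ h1 h2

/-- The maximal intersection blowup `D̂` of a lexicographic northwest diagram — the
diagram whose columns are the distinct intersections `⋂_{j ∈ S} C j` over nonempty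
`S`, each appearing once, in lexicographic order — is again a lexicographic northwest
diagram. -/
theorem maximal_blowup_lex_northwest (r : ℕ) (C : Fin r → Finset ℕ)
    (hNW : IsNorthwest C) (hlex : IsLex C) :
    ∃ (m : ℕ) (E : Fin m → Finset ℕ),
      Function.Injective E ∧
      (∀ A : Finset ℕ,
        (∃ k, E k = A) ↔ ∃ (S : Finset (Fin r)) (hS : S.Nonempty), S.inf' hS C = A) ∧
      IsLex E ∧ IsNorthwest E := by
  classical
  -- the set of all intersections
  set g : Finset (Fin r) → Finset ℕ := fun S =>
    if h : S.Nonempty then S.inf' h C else ∅ with hg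
  have hgval : ∀ (S : Finset (Fin r)) (h : S.Nonempty), g S = S.inf' h C := by
    intro S h
    simp only [hg, dif_pos h]
  set T : Finset (Finset ℕ) :=
    ((Finset.univ : Finset (Finset (Fin r))).filter (fun S => S.Nonempty)).image g with hT
  have hmemT : ∀ A : Finset ℕ,
      A ∈ T ↔ ∃ (S : Finset (Fin r)) (hS : S.Nonempty), S.inf' hS C = A := by
    intro A
    constructor
    · rintro hA
      rw [hT, Finset.mem_image] at hA
      obtain ⟨S, hS, hSA⟩ := hA
      rw [Finset.mem_filter] at hS
      exact ⟨S, hS.2, by rw [← hgval S hS.2]; exact hSA⟩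
    · rintro ⟨S, hS, hSA⟩
      rw [hT, Finset.mem_image]
      exact ⟨S, Finset.mem_filter.2 ⟨Finset.mem_univ _, hS⟩, by rw [hgval S hS]; exact hSA⟩
  -- sort T by LexLT
  set R : Finset ℕ → Finset ℕ → Prop := fun A B => LexLT A B ∨ A = B with hR
  haveI : DecidableRel R := fun A B => Classical.dec _
  haveI : IsTrans (Finset ℕ) R := by
    constructor
    rintro a b c (h1 | rfl) h2
    · rcases h2 with h2 | rfl
      · exact Or.inl (lexLT_trans h1 h2)
      · exact Or.inl h1
    · exact h2
  haveI : IsAntisymm (Finset ℕ) R := by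
    constructor
    rintro a b (h1 | rfl) h2
    · rcases h2 with h2 | rfl
      · exact absurd h2 (lexLT_asymm h1)
      · rfl
    · rfl
  haveI : IsTotal (Finset ℕ) R := by
    constructor
    intro a b
    rcases lexLT_trichotomy a b with h | h | h
    · exact Or.inl (Or.inl h)
    · exact Or.inl (Or.inr h)
    · exact Or.inr (Or.inl h)
  set L : List (Finset ℕ) := T.sort R with hL
  have hlen : L.length = T.card := Finset.length_sort R
  set E : Fin T.card → Finset ℕ := fun k => L.get (Fin.cast hlen.symm k) with hE
  have hgetinj : Function.Injective L.get :=
    List.nodup_iff_injective_get.1 (Finset.sort_nodup T R)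
  have hEinj : Function.Injective E := by
    intro a b hab
    have := hgetinj hab
    simpa [Fin.ext_iff] using this
  have hEmem : ∀ A : Finset ℕ, (∃ k, E k = A) ↔ A ∈ T := by
    intro A
    constructor
    · rintro ⟨k, rfl⟩
      exact (Finset.mem_sort R).1 (List.get_mem L _)
    · intro hA
      have : A ∈ L := (Finset.mem_sort R).2 hA
      obtain ⟨n, hn⟩ := List.mem_iff_get.1 this
      exact ⟨Fin.cast hlen n, hn⟩
  have hElex : IsLex E := by
    intro a b hab
    have hsorted : L.Pairwise R := Finset.pairwise_sort T R
    have hcast : (Fin.cast hlen.symm a) < (Fin.cast hlen.symm b) := hab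
    have hrel : R (E a) (E b) := hsorted.rel_get_of_lt hcast
    rcases hrel with h | h
    · exact h
    · exact absurd (hEinj h) (ne_of_lt hab)
  refine ⟨T.card, E, hEinj, fun A => (hEmem A).trans (hmemT A), hElex, ?_⟩
  -- northwest
  intro k k' hkk' i hi i' hi'
  rcases le_or_gt i i' with hii | hii
  · rwa [min_eq_left hii]
  · rw [min_eq_right hii.le]
    rcases eq_or_lt_of_le hkk' with rfl | hklt
    · exact hi'
    have hAB : LexLT (E k) (E k') := hElex k k' hklt
    obtain ⟨S, hS, hSA⟩ := (hmemT (E k)).1 ((hEmem (E k)).1 ⟨k, rfl⟩)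
    obtain ⟨S', hS', hSB⟩ := (hmemT (E k')).1 ((hEmem (E k')).1 ⟨k', rfl⟩)
    have hiS : ∀ j ∈ S, i ∈ C j := by
      rw [← hSA] at hi; exact (Finset.mem_inf' hS).1 hi
    have hi'S' : ∀ j ∈ S', i' ∈ C j := by
      rw [← hSB] at hi'; exact (Finset.mem_inf' hS').1 hi'
    rw [← hSA]
    refine (Finset.mem_inf' hS).2 ?_
    intro j hj
    by_cases hex : ∃ j' ∈ S', j ≤ j'
    · obtain ⟨j', hj', hle⟩ := hex
      have := hNW j j' hle i (hiS j hj) i' (hi'S' j' hj')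
      rwa [min_eq_right hii.le] at this
    · push_neg at hex
      rcases lexLT_aux hAB hi hi' hii with hmem | ⟨a, haA, haB, halt⟩
      · rw [← hSA] at hmem
        exact (Finset.mem_inf' hS).1 hmem j hj
      · exfalso
        have haS : ∀ j'' ∈ S, a ∈ C j'' := by
          rw [← hSA] at haA; exact (Finset.mem_inf' hS).1 haA
        have : ¬ ∀ j' ∈ S', a ∈ C j' := by
          intro hall
          exact haB (hSB ▸ (Finset.mem_inf' hS').2 hall)
        push_neg at this
        obtain ⟨j', hj', hnot⟩ := this
        have hle : j' ≤ j := (hex j' hj').le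
        have := hNW j' j hle i' (hi'S' j' hj') a (haS j hj)
        rw [min_eq_right halt.le] at this
        exact hnot this
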